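/- The map Z[1/2] → C(Ω,Z)/{f − f∘τ} sending 2^{−n} to the class of the characteristic function of 2ⁿΩ is a well-defined group homomorphism and is inverse to the integration map; in particular the coinvariant group is torsion-free and 2-divisible. -/

import Mathlib

open MeasureTheory
open scoped Classical

/-- The set `2ⁿΩ + k` inside the dyadic integers. -/
def dyadicBall (n : ℕ) (k : ℤ_[2]) : Set ℤ_[2] := {x | ∃ y, x = 2 ^ n * y + k}

/-- The subgroup `ℤ[1/2]` of `ℝ` of dyadic rationals (generated by the `2⁻ⁿ`). -/
noncomputable def dyadicSubgroup : AddSubgroup ℝ :=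
  AddSubgroup.closure {x : ℝ | ∃ n : ℕ, x = ((2 : ℝ) ^ n)⁻¹}

/-- The odometer `x ↦ x + 1` on the dyadic integers, as a continuous map. -/
noncomputable def tau : C(ℤ_[2], ℤ_[2]) := ⟨fun x => x + 1, by continuity⟩

/-- The subgroup of `C(Ω, ℤ)` generated by the elements `f - f ∘ τ`. -/
noncomputable def coinvRel : AddSubgroup C(ℤ_[2], ℤ) :=
  AddSubgroup.closure {g | ∃ f : C(ℤ_[2], ℤ), g = f - f.comp tau}

/-! ### Auxiliary definitions and lemmas -/

/-- The coset `2ⁿΩ + k`, described by divisibility. -/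
def DB (n : ℕ) (k : ℤ_[2]) : Set ℤ_[2] := {x | (2 : ℤ_[2]) ^ n ∣ x - k}

lemma mem_DB_iff_norm (n : ℕ) (k x : ℤ_[2]) :
    x ∈ DB n k ↔ ‖x - k‖ ≤ (2 : ℝ) ^ (-(n : ℤ)) := by
  have h := PadicInt.norm_le_pow_iff_mem_span_pow (p := 2) (x - k) n
  rw [Ideal.mem_span_singleton] at h
  simp only [Nat.cast_ofNat] at h
  exact h.symm

lemma isClopen_DB (n : ℕ) (k : ℤ_[2]) : IsClopen (DB n k) := by
  constructor
  · have : DB n k = {x | ‖x - k‖ ≤ (2 : ℝ) ^ (-(n : ℤ))} := by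
      ext x; exact mem_DB_iff_norm n k x
    rw [this]
    exact isClosed_le (by continuity) continuous_const
  · have : DB n k = {x | ‖x - k‖ < (2 : ℝ) ^ (-(n : ℤ) + 1)} := by
      ext x
      rw [mem_DB_iff_norm n k x]
      have h := PadicInt.norm_le_pow_iff_norm_lt_pow_add_one (p := 2) (x - k) (-(n:ℤ))
      simp only [Nat.cast_ofNat] at h
      exact h
    rw [this]
    exact isOpen_lt (by continuity) continuous_const

lemma dyadicBall_eq (n : ℕ) : dyadicBall n 0 = DB n 0 := by
  ext x
  simp only [dyadicBall, DB, Set.mem_setOf_eq, add_zero, sub_zero]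
  exact ⟨fun ⟨y, hy⟩ => ⟨y, hy⟩, fun ⟨y, hy⟩ => ⟨y, hy⟩⟩

/-- The indicator of `DB n k` as a continuous map. -/
noncomputable def chi (n : ℕ) (k : ℤ_[2]) : C(ℤ_[2], ℤ) :=
  ⟨fun x => if x ∈ DB n k then 1 else 0, by
    apply IsLocallyConstant.continuous (f := fun x => if x ∈ DB n k then (1:ℤ) else 0)
    intro s
    by_cases h1 : (1 : ℤ) ∈ s <;> by_cases h0 : (0 : ℤ) ∈ s
    · convert isOpen_univ
      ext x; by_cases hx : x ∈ DB n k <;> simp [hx, h1, h0]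
    · convert (isClopen_DB n k).2
      ext x; by_cases hx : x ∈ DB n k <;> simp [hx, h1, h0]
    · convert (isClopen_DB n k).1.isOpen_compl
      ext x; by_cases hx : x ∈ DB n k <;> simp [hx, h1, h0]
    · convert isOpen_empty
      ext x; by_cases hx : x ∈ DB n k <;> simp [hx, h1, h0]⟩

lemma chi_apply (n : ℕ) (k x : ℤ_[2]) :
    chi n k x = if x ∈ DB n k then 1 else 0 := rfl

lemma chi_succ_sub_mem (n : ℕ) (k : ℤ_[2]) :
    chi n (k + 1) - chi n k ∈ coinvRel := by
  apply AddSubgroup.subset_closure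
  refine ⟨chi n (k + 1), ?_⟩
  congr 1
  ext x
  simp only [ContinuousMap.comp_apply, chi_apply]
  have htau : tau x = x + 1 := rfl
  rw [htau]
  have hmem : x + 1 ∈ DB n (k + 1) ↔ x ∈ DB n k := by
    simp only [DB, Set.mem_setOf_eq]
    constructor <;> intro h <;> · convert h using 1; ring
  by_cases h : x ∈ DB n k <;> simp [h, hmem]

lemma chi_nat_sub_mem (n m : ℕ) : chi n (m : ℤ_[2]) - chi n 0 ∈ coinvRel := by
  induction m with
  | zero => simpa using coinvRel.zero_mem
  | succ m ih =>
      have h1 := chi_succ_sub_mem n (m : ℤ_[2])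
      have h2 := coinvRel.add_mem h1 ih
      push_cast
      convert h2 using 1
      abel

lemma rep_unique {n a b : ℕ} (ha : a < 2 ^ n) (hb : b < 2 ^ n)
    (h : (2 : ℤ_[2]) ^ n ∣ (a : ℤ_[2]) - (b : ℤ_[2])) : a = b := by
  have hcast : ((a : ℤ_[2]) - b) = (((a : ℤ) - (b : ℤ) : ℤ) : ℤ_[2]) := by push_cast; ring
  rw [hcast] at h
  have hnorm : ‖(((a : ℤ) - b : ℤ) : ℤ_[2])‖ ≤ (2 : ℝ) ^ (-(n : ℤ)) := by
    have h' := (PadicInt.norm_le_pow_iff_mem_span_pow (p := 2) (((a : ℤ) - b : ℤ) : ℤ_[2]) n)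
    rw [Ideal.mem_span_singleton] at h'
    simp only [Nat.cast_ofNat] at h'
    exact h'.mpr h
  have hdvd : ((2 : ℤ) ^ n) ∣ ((a : ℤ) - b) := by
    have h' := (PadicInt.norm_int_le_pow_iff_dvd (p := 2) (k := (a : ℤ) - b) (n := n))
    simp only [Nat.cast_ofNat] at h'
    exact h'.mp hnorm
  have habs : |(a : ℤ) - b| < 2 ^ n := by
    rw [abs_lt]; constructor <;> [linarith [Int.ofNat_lt.mpr hb, (Int.ofNat_nonneg a)];
      linarith [Int.ofNat_lt.mpr ha, (Int.ofNat_nonneg b)]]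
  have : (a : ℤ) - b = 0 := Int.eq_zero_of_abs_lt_dvd hdvd habs
  omega

lemma mem_DB_appr (n : ℕ) (x : ℤ_[2]) : x ∈ DB n ((x.appr n : ℕ) : ℤ_[2]) := by
  have h := PadicInt.appr_spec n x
  rw [Ideal.mem_span_singleton] at h
  simpa [DB, Set.mem_setOf_eq] using h

lemma decomp (n : ℕ) (f : C(ℤ_[2], ℤ))
    (hf : ∀ x y, (2 : ℤ_[2]) ^ n ∣ x - y → f x = f y) :
    f = ∑ k ∈ Finset.range (2 ^ n), f ((k : ℕ) : ℤ_[2]) • chi n ((k : ℕ) : ℤ_[2]) := by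
  ext x
  rw [ContinuousMap.coe_sum]
  simp only [Finset.sum_apply, ContinuousMap.coe_smul, Pi.smul_apply, smul_eq_mul]
  rw [Finset.sum_eq_single (x.appr n)]
  · rw [chi_apply]
    rw [if_pos (mem_DB_appr n x)]
    rw [mul_one]
    exact hf x _ (mem_DB_appr n x)
  · intro k hk hne
    rw [chi_apply]
    rw [if_neg, mul_zero]
    intro hmem
    apply hne
    apply rep_unique (Finset.mem_range.mp hk) (PadicInt.appr_lt x n)
    have h1 : (2 : ℤ_[2]) ^ n ∣ x - k := hmem
    have h2 : (2 : ℤ_[2]) ^ n ∣ x - (x.appr n : ℤ_[2]) := mem_DB_appr n x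
    have h3 := dvd_sub h1 h2
    convert (dvd_neg.mpr h3) using 1
    ring
  · intro h
    exact absurd (Finset.mem_range.mpr (PadicInt.appr_lt x n)) h

lemma exists_level (f : C(ℤ_[2], ℤ)) :
    ∃ n : ℕ, ∀ x y : ℤ_[2], (2 : ℤ_[2]) ^ n ∣ x - y → f x = f y := by
  have huc : UniformContinuous f := CompactSpace.uniformContinuous_of_continuous f.continuous
  rw [Metric.uniformContinuous_iff] at huc
  obtain ⟨δ, hδ, hd⟩ := huc 1 one_pos
  obtain ⟨n, hn⟩ := exists_pow_lt_of_lt_one hδ (by norm_num : (1:ℝ)/2 < 1)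
  refine ⟨n, fun x y hdvd => ?_⟩
  have hxy : dist x y < δ := by
    rw [dist_eq_norm]
    have h1 : ‖x - y‖ ≤ (2:ℝ)^(-(n:ℤ)) := (mem_DB_iff_norm n y x).mp hdvd
    have h2 : ((2:ℝ))^(-(n:ℤ)) = (1/2 : ℝ)^n := by
      rw [zpow_neg, zpow_natCast]
      rw [div_pow, one_pow, one_div]
    rw [h2] at h1
    linarith
  have hdist := hd hxy
  rw [Int.dist_eq] at hdist
  have habs : |f x - f y| < 1 := by
    have hcast : ((|f x - f y| : ℤ) : ℝ) < 1 := by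
      rw [Int.cast_abs]
      push_cast
      exact hdist
    exact_mod_cast hcast
  have := abs_lt.mp habs
  omega

section Meas
variable [MeasurableSpace ℤ_[2]] [BorelSpace ℤ_[2]]
variable (μ : Measure ℤ_[2]) [IsProbabilityMeasure μ] [μ.IsAddLeftInvariant]

omit [IsProbabilityMeasure μ] [μ.IsAddLeftInvariant] in
lemma measurable_DB (n : ℕ) (k : ℤ_[2]) : MeasurableSet (DB n k) :=
  (isClopen_DB n k).isOpen.measurableSet

omit [IsProbabilityMeasure μ] in
lemma measure_DB_eq (n : ℕ) (k : ℤ_[2]) : μ (DB n k) = μ (DB n 0) := by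
  have hset : DB n k = (fun x => (-k) + x) ⁻¹' (DB n 0) := by
    ext x
    simp only [DB, Set.mem_setOf_eq, Set.mem_preimage, sub_zero]
    constructor <;> intro h <;> · convert h using 1; ring
  rw [hset, measure_preimage_add]

lemma partitionDB (n : ℕ) :
    ⋃ k ∈ Finset.range (2 ^ n), DB n ((k : ℕ) : ℤ_[2]) = Set.univ := by
  ext x
  simp only [Set.mem_iUnion, Set.mem_univ, iff_true, Finset.mem_range]
  exact ⟨x.appr n, PadicInt.appr_lt x n, mem_DB_appr n x⟩

lemma disjDB (n : ℕ) : Set.PairwiseDisjoint (Finset.range (2 ^ n) : Set ℕ)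
    (fun k => DB n ((k : ℕ) : ℤ_[2])) := by
  intro a ha b hb hne
  simp only [Finset.coe_range, Set.mem_Iio] at ha hb
  refine Set.disjoint_left.mpr fun x hxa hxb => hne ?_
  apply rep_unique ha hb
  have h1 : (2 : ℤ_[2]) ^ n ∣ x - a := hxa
  have h2 : (2 : ℤ_[2]) ^ n ∣ x - b := hxb
  have h3 := dvd_sub h2 h1
  convert h3 using 1; ring

lemma measure_DB_toReal (n : ℕ) : (μ (DB n 0)).toReal = ((2 : ℝ) ^ n)⁻¹ := by
  have hsum : ∑ k ∈ Finset.range (2 ^ n), μ (DB n ((k : ℕ) : ℤ_[2])) = 1 := by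
    rw [← measure_biUnion_finset (disjDB n) (fun k _ => measurable_DB n _)]
    rw [partitionDB n]
    exact measure_univ
  have hconst : ∀ k ∈ Finset.range (2 ^ n), μ (DB n ((k : ℕ) : ℤ_[2])) = μ (DB n 0) :=
    fun k _ => measure_DB_eq μ n _
  rw [Finset.sum_congr rfl hconst, Finset.sum_const, Finset.card_range] at hsum
  have hne : μ (DB n 0) ≠ ⊤ := measure_ne_top μ _
  have h := congrArg ENNReal.toReal hsum
  rw [ENNReal.toReal_one, nsmul_eq_mul, ENNReal.toReal_mul, ENNReal.toReal_natCast] at h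
  push_cast at h
  field_simp
  linarith

omit [IsProbabilityMeasure μ] [μ.IsAddLeftInvariant] in
lemma integrable_cast (f : C(ℤ_[2], ℤ)) [IsFiniteMeasure μ] :
    Integrable (fun x => (f x : ℝ)) μ := by
  apply Continuous.integrable_of_hasCompactSupport
  · exact continuous_of_discreteTopology.comp f.continuous
  · exact (isClosed_tsupport _).isCompact

omit [IsProbabilityMeasure μ] [μ.IsAddLeftInvariant] in
lemma integral_chi (n : ℕ) (k : ℤ_[2]) :
    ∫ x, ((chi n k x : ℤ) : ℝ) ∂μ = (μ (DB n k)).toReal := by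
  have hfun : (fun x => ((chi n k x : ℤ) : ℝ)) =
      Set.indicator (DB n k) (fun _ => (1 : ℝ)) := by
    ext x
    rw [chi_apply, Set.indicator_apply]
    split_ifs <;> simp
  rw [hfun, integral_indicator_const (1 : ℝ) (measurable_DB n k), smul_eq_mul, mul_one]
  rfl

/-- The integration map as an additive homomorphism. -/
noncomputable def intHom : C(ℤ_[2], ℤ) →+ ℝ where
  toFun f := ∫ x, (f x : ℝ) ∂μ
  map_zero' := by simp
  map_add' f g := by
    have h : (fun x => (((f + g) x : ℤ) : ℝ)) = fun x => ((f x : ℝ) + (g x : ℝ)) := by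
      funext x
      push_cast [ContinuousMap.add_apply]
      ring
    show (∫ x, (((f + g) x : ℤ) : ℝ) ∂μ) = _
    rw [h, integral_add (integrable_cast μ f) (integrable_cast μ g)]

lemma intHom_chi (n : ℕ) (k : ℤ_[2]) : intHom μ (chi n k) = ((2 : ℝ) ^ n)⁻¹ := by
  show (∫ x, ((chi n k x : ℤ) : ℝ) ∂μ) = _
  rw [integral_chi, measure_DB_eq, measure_DB_toReal]

lemma intHom_eq (n : ℕ) (f : C(ℤ_[2], ℤ))
    (hf : ∀ x y, (2 : ℤ_[2]) ^ n ∣ x - y → f x = f y) :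
    intHom μ f = (∑ k ∈ Finset.range (2 ^ n), f ((k : ℕ) : ℤ_[2])) • ((2 : ℝ) ^ n)⁻¹ := by
  conv_lhs => rw [decomp n f hf]
  rw [map_sum]
  rw [Finset.sum_congr rfl (fun k _ => by
    rw [AddMonoidHom.map_zsmul, intHom_chi])]
  rw [← Finset.sum_smul]

lemma intHom_coinv (g : C(ℤ_[2], ℤ)) (hg : g ∈ coinvRel) : intHom μ g = 0 := by
  induction hg using AddSubgroup.closure_induction with
  | mem x hx =>
      obtain ⟨f, rfl⟩ := hx
      rw [map_sub]
      have htau : intHom μ (f.comp tau) = intHom μ f := by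
        show (∫ x, ((f.comp tau x : ℤ) : ℝ) ∂μ) = ∫ x, ((f x : ℤ) : ℝ) ∂μ
        have h1 : (fun x => ((f.comp tau x : ℤ) : ℝ)) =
            fun x => ((f (1 + x) : ℤ) : ℝ) := by
          funext x
          have : tau x = 1 + x := add_comm x 1
          simp [ContinuousMap.comp_apply, this]
        rw [h1]
        exact integral_add_left_eq_self (fun x => ((f x : ℤ) : ℝ)) 1
      rw [htau, sub_self]
  | zero => exact map_zero _
  | add x y hx hy ihx ihy => rw [map_add, ihx, ihy, add_zero]
  | neg x hx ih => rw [map_neg, ih, neg_zero]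

end Meas

/-- The map `ℤ[1/2] → C(Ω,ℤ)/{f - f∘τ}` sending `2⁻ⁿ` to the class of
`χ_{2ⁿΩ}` is a well-defined group homomorphism inverse to the integration map;
in particular the coinvariant group is torsion-free and `2`-divisible. -/
theorem stmt9 [MeasurableSpace ℤ_[2]] [BorelSpace ℤ_[2]]
    (μ : Measure ℤ_[2]) [IsProbabilityMeasure μ] [μ.IsAddLeftInvariant] :
    ∃ ψ : dyadicSubgroup ≃+ (C(ℤ_[2], ℤ) ⧸ coinvRel),
      (∀ (n : ℕ) (f : C(ℤ_[2], ℤ)),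
        (∀ x, f x = Set.indicator (dyadicBall n 0) (fun _ => (1 : ℤ)) x) →
        ψ ⟨((2 : ℝ) ^ n)⁻¹, AddSubgroup.subset_closure ⟨n, rfl⟩⟩ =
          QuotientAddGroup.mk f) ∧
      (∀ f : C(ℤ_[2], ℤ),
        ((ψ.symm (QuotientAddGroup.mk f) : dyadicSubgroup) : ℝ) =
          ∫ x, (f x : ℝ) ∂μ) ∧
      (∀ (q : C(ℤ_[2], ℤ) ⧸ coinvRel) (m : ℤ), m ≠ 0 → m • q = 0 → q = 0) ∧
      (∀ q : C(ℤ_[2], ℤ) ⧸ coinvRel, ∃ q', 2 • q' = q) := by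
  classical
  -- the lifted integration map on the quotient
  set φ : (C(ℤ_[2], ℤ) ⧸ coinvRel) →+ ℝ :=
    QuotientAddGroup.lift coinvRel (intHom μ) (intHom_coinv μ) with hφdef
  have hφ_mk : ∀ f : C(ℤ_[2], ℤ), φ (QuotientAddGroup.mk f) = intHom μ f := fun f => rfl
  -- key quotient formula
  have hmk_eq : ∀ (n : ℕ) (f : C(ℤ_[2], ℤ)),
      (∀ x y, (2 : ℤ_[2]) ^ n ∣ x - y → f x = f y) →
      (QuotientAddGroup.mk f : C(ℤ_[2], ℤ) ⧸ coinvRel) =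
        (∑ k ∈ Finset.range (2 ^ n), f ((k : ℕ) : ℤ_[2])) •
          (QuotientAddGroup.mk (chi n 0) : C(ℤ_[2], ℤ) ⧸ coinvRel) := by
    intro n f hf
    conv_lhs => rw [decomp n f hf]
    rw [← QuotientAddGroup.mk'_apply, map_sum]
    rw [Finset.sum_congr rfl (fun k _ => by
      rw [AddMonoidHom.map_zsmul, QuotientAddGroup.mk'_apply,
        show (QuotientAddGroup.mk (chi n ((k : ℕ) : ℤ_[2])) : C(ℤ_[2], ℤ) ⧸ coinvRel) =
          QuotientAddGroup.mk (chi n 0) from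
          QuotientAddGroup.eq_iff_sub_mem.mpr (chi_nat_sub_mem n k)])]
    rw [← Finset.sum_smul]
  -- membership of values in the dyadic subgroup
  have hmem : ∀ q, φ q ∈ dyadicSubgroup := by
    intro q
    induction q using QuotientAddGroup.induction_on with
    | H f =>
        obtain ⟨n, hf⟩ := exists_level f
        rw [hφ_mk, intHom_eq μ n f hf]
        apply AddSubgroup.zsmul_mem
        exact AddSubgroup.subset_closure ⟨n, rfl⟩
  -- injectivity
  have hker : ∀ q, φ q = 0 → q = 0 := by
    intro q hq
    induction q using QuotientAddGroup.induction_on with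
    | H f =>
        obtain ⟨n, hf⟩ := exists_level f
        rw [hφ_mk, intHom_eq μ n f hf] at hq
        have hne : ((2 : ℝ) ^ n)⁻¹ ≠ 0 := by positivity
        rw [zsmul_eq_mul, mul_eq_zero] at hq
        have hsum : (∑ k ∈ Finset.range (2 ^ n), f ((k : ℕ) : ℤ_[2])) = 0 := by
          rcases hq with h | h
          · exact_mod_cast h
          · exact absurd h hne
        rw [hmk_eq n f hf, hsum, zero_zsmul]
  have hinj : Function.Injective φ := by
    intro a b hab
    have : φ (a - b) = 0 := by rw [map_sub, hab, sub_self]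
    have := hker _ this
    rwa [sub_eq_zero] at this
  -- surjectivity onto the dyadic subgroup
  have hsurj : ∀ x ∈ dyadicSubgroup, ∃ q, φ q = x := by
    intro x hx
    induction hx using AddSubgroup.closure_induction with
    | mem y hy =>
        obtain ⟨n, rfl⟩ := hy
        refine ⟨QuotientAddGroup.mk (chi n 0), ?_⟩
        rw [hφ_mk, intHom_chi]
    | zero =>
        refine ⟨0, ?_⟩
        exact map_zero _
    | add y z hy hz ihy ihz =>
        obtain ⟨q1, hq1⟩ := ihy
        obtain ⟨q2, hq2⟩ := ihz
        refine ⟨q1 + q2, ?_⟩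
        rw [map_add, hq1, hq2]
    | neg y hy ih =>
        obtain ⟨q, hq⟩ := ih
        refine ⟨-q, ?_⟩
        rw [map_neg, hq]
  -- the isomorphism
  set φ' : (C(ℤ_[2], ℤ) ⧸ coinvRel) →+ dyadicSubgroup :=
    AddMonoidHom.codRestrict φ dyadicSubgroup hmem with hφ'def
  have hφ'coe : ∀ q, (φ' q : ℝ) = φ q := fun q => rfl
  have hinj' : Function.Injective φ' := by
    intro a b hab
    exact hinj (by rw [← hφ'coe, ← hφ'coe, hab])
  have hsurj' : Function.Surjective φ' := by
    rintro ⟨x, hx⟩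
    obtain ⟨q, hq⟩ := hsurj x hx
    exact ⟨q, Subtype.ext (by rw [hφ'coe, hq])⟩
  set e : (C(ℤ_[2], ℤ) ⧸ coinvRel) ≃+ dyadicSubgroup :=
    AddEquiv.ofBijective φ' ⟨hinj', hsurj'⟩ with hedef
  have he_apply : ∀ q, e q = φ' q := fun q => rfl
  refine ⟨e.symm, ?_, ?_, ?_, ?_⟩
  · -- ψ sends 2⁻ⁿ to the class of the indicator
    intro n f hf
    have hfchi : f = chi n 0 := by
      ext x
      rw [hf x, chi_apply, dyadicBall_eq, Set.indicator_apply]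
    rw [hfchi]
    rw [AddEquiv.symm_apply_eq]
    refine Subtype.ext ?_
    rw [he_apply, hφ'coe, hφ_mk, intHom_chi]
  · -- ψ.symm is the integration map
    intro f
    rw [AddEquiv.symm_symm]
    rw [he_apply, hφ'coe, hφ_mk]
    rfl
  · -- torsion-free
    intro q m hm h
    have h1 : e (m • q) = 0 := by rw [h, map_zero]
    rw [map_zsmul e m q] at h1
    have h2 : (m : ℝ) * ((e q : dyadicSubgroup) : ℝ) = 0 := by
      have := congrArg (fun x : dyadicSubgroup => (x : ℝ)) h1
      simpa [zsmul_eq_mul] using this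
    have h3 : ((e q : dyadicSubgroup) : ℝ) = 0 := by
      rcases mul_eq_zero.mp h2 with h | h
      · exact absurd (Int.cast_eq_zero.mp h) hm
      · exact h
    have h4 : e q = 0 := Subtype.ext h3
    have := congrArg e.symm h4
    rwa [AddEquiv.symm_apply_apply, map_zero] at this
  · -- 2-divisibility
    intro q
    have key : ∀ x ∈ dyadicSubgroup, ∃ y, y ∈ dyadicSubgroup ∧ 2 • y = x := by
      intro x hx
      induction hx using AddSubgroup.closure_induction with
      | mem y hy =>
          obtain ⟨n, rfl⟩ := hy
          refine ⟨((2 : ℝ) ^ (n + 1))⁻¹, AddSubgroup.subset_closure ⟨n + 1, rfl⟩, ?_⟩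
          rw [nsmul_eq_mul]
          push_cast
          rw [pow_succ]
          field_simp
      | zero => exact ⟨0, zero_mem _, smul_zero _⟩
      | add y z hy hz ihy ihz =>
          obtain ⟨y1, hy1, hy2⟩ := ihy
          obtain ⟨z1, hz1, hz2⟩ := ihz
          exact ⟨y1 + z1, add_mem hy1 hz1, by rw [smul_add, hy2, hz2]⟩
      | neg y hy ih =>
          obtain ⟨y1, hy1, hy2⟩ := ih
          exact ⟨-y1, neg_mem hy1, by rw [smul_neg, hy2]⟩
    obtain ⟨y, hy, h2y⟩ := key ((e q : dyadicSubgroup) : ℝ) (e q).2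
    refine ⟨e.symm ⟨y, hy⟩, ?_⟩
    have h5 : (2 : ℕ) • (⟨y, hy⟩ : dyadicSubgroup) = e q := by
      refine Subtype.ext ?_
      rw [← h2y]
      rfl
    calc 2 • e.symm ⟨y, hy⟩ = e.symm ((2 : ℕ) • (⟨y, hy⟩ : dyadicSubgroup)) := by
          rw [map_nsmul e.symm 2]
      _ = e.symm (e q) := by rw [h5]
      _ = q := e.symm_apply_apply q
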